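/- Let K → K' be a finite Galois extension of Henselian valuation fields of height 1 with Galois group G = Gal(K'/K), and let π ∈ O_K. The action of G on K' restricts to O_{K'} and induces an action on O_{K'}/πO_{K'}, making it a ℤ[G]-module. Let c ∈ O_K be an element lying in the ideal of O_{K'} generated by the products ε·d with ε ∈ m̃_K and d ∈ 𝔇_{K'/K}. Then the natural map O_K/πO_K → (O_{K'}/πO_{K'})^G = H^0(G, O_{K'}/πO_{K'}) is injective, c annihilates its cokernel, and c annihilates the group cohomology H^q(G, O_{K'}/πO_{K'}) for every integer q ≥ 1. -/

import Mathlib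

/-- The ideal `m̃_K`: it is all of `O_K` when the valuation is discrete (equivalently, the
maximal ideal is principal), and the maximal ideal otherwise. -/
noncomputable def tildeMax {K : Type*} [Field K] (O : ValuationSubring K) : Ideal ↥O :=
  open Classical in
  if (IsLocalRing.maximalIdeal ↥O).IsPrincipal then ⊤ else IsLocalRing.maximalIdeal ↥O

/-- The different ideal `𝔇_{K'/K}` of a finite separable extension of valuation fields, viewed
as the set of its elements in `K'`. -/
def differentSet (K L : Type*) [Field K] [Field L] [Algebra K L]
    (OK : ValuationSubring K) (OL : ValuationSubring L) : Set L :=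
  {d | d ∈ OL ∧ ∀ x : L,
    (∀ y : L, y ∈ OL → Algebra.trace K L (x * y) ∈ OK) → d * x ∈ OL}

/-- The differential of the complex of inhomogeneous cochains of a group `G` with coefficients
in an abelian group `M` equipped with an action `ρ` of `G` (the same formula as in Mathlib's
`groupCohomology.inhomogeneousCochains`). -/
def cochainD {G M : Type*} [Monoid G] [AddCommGroup M] (ρ : G → M → M) {n : ℕ}
    (f : (Fin n → G) → M) : (Fin (n + 1) → G) → M :=
  fun g => ρ (g 0) (f fun i => g i.succ) +
    ∑ j : Fin (n + 1), (-1 : ℤ) ^ ((j : ℕ) + 1) • f (Fin.contractNth j (· * ·) g)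

section st15helpers

variable {G : Type*} [Group G]

lemma st15.contract_succ {n : ℕ} (j₀ : Fin (n+1)) (γ : Fin (n+2) → G) :
    (fun k : Fin n => Fin.contractNth j₀.succ (· * ·) γ k.succ) =
      Fin.contractNth j₀ (· * ·) (fun k : Fin (n+1) => γ k.succ) := by
  funext k
  rcases lt_trichotomy (k : ℕ) (j₀ : ℕ) with h | h | h
  · rw [Fin.contractNth_apply_of_lt _ _ _ _ (by simpa using h),
      Fin.contractNth_apply_of_lt _ _ _ _ (by simpa using Nat.succ_lt_succ h),
      Fin.succ_castSucc]
  · rw [Fin.contractNth_apply_of_eq _ _ _ _ (by simpa using h),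
      Fin.contractNth_apply_of_eq _ _ _ _ (by simp [h]),
      Fin.succ_castSucc]
  · rw [Fin.contractNth_apply_of_gt _ _ _ _ (by simpa using h),
      Fin.contractNth_apply_of_gt _ _ _ _ (by simpa using Nat.succ_lt_succ h)]

lemma st15.prod_contract {n : ℕ} (j : Fin (n+1)) (hj : (j : ℕ) < n) (γ : Fin (n+1) → G) :
    (List.ofFn (Fin.contractNth j (· * ·) γ)).prod = (List.ofFn γ).prod := by
  induction n with
  | zero => exact absurd hj (Nat.not_lt_zero _)
  | succ n IH =>
    cases j using Fin.cases with
    | zero =>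
      rw [List.ofFn_succ, List.ofFn_succ, List.prod_cons, List.prod_cons,
        List.ofFn_succ, List.prod_cons]
      rw [Fin.contractNth_apply_of_eq _ _ _ _ (by simp)]
      have h2 : (fun k : Fin n => Fin.contractNth (0 : Fin (n+2)) (· * ·) γ k.succ) =
          (fun k : Fin n => γ k.succ.succ) := by
        funext k
        rw [Fin.contractNth_apply_of_gt _ _ _ _ (by simp)]
      rw [h2, mul_assoc]
      rfl
    | succ j₀ =>
      rw [List.ofFn_succ, List.ofFn_succ, List.prod_cons, List.prod_cons]
      rw [Fin.contractNth_apply_of_lt _ _ _ _ (by simp), st15.contract_succ,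
        IH j₀ (by simpa using hj)]
      rfl

lemma st15.contract_last {n : ℕ} (γ : Fin (n+1) → G) :
    Fin.contractNth (Fin.last n) (· * ·) γ = fun k : Fin n => γ k.castSucc := by
  funext k
  rw [Fin.contractNth_apply_of_lt _ _ _ _ (by simpa using k.isLt)]

lemma st15.snoc_comp_succ {n : ℕ} (γ : Fin (n+1) → G) (τ : G) :
    (fun i : Fin (n+1) => (Fin.snoc γ τ : Fin (n+2) → G) i.succ) =
      Fin.snoc (fun i : Fin n => γ i.succ) τ := by
  funext k
  cases k using Fin.lastCases with
  | last => rw [Fin.succ_last, Fin.snoc_last, Fin.snoc_last]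
  | cast k => rw [Fin.succ_castSucc, Fin.snoc_castSucc, Fin.snoc_castSucc]

lemma st15.snoc_zero {n : ℕ} (γ : Fin (n+1) → G) (τ : G) :
    (Fin.snoc γ τ : Fin (n+2) → G) 0 = γ 0 := by
  have : (0 : Fin (n+2)) = Fin.castSucc 0 := rfl
  rw [this, Fin.snoc_castSucc]

lemma st15.contract_castSucc_snoc {n : ℕ} (j : Fin (n+1)) (hj : (j : ℕ) < n)
    (γ : Fin (n+1) → G) (τ : G) :
    Fin.contractNth j.castSucc (· * ·) (Fin.snoc γ τ : Fin (n+2) → G) =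
      Fin.snoc (Fin.contractNth j (· * ·) γ) τ := by
  funext k
  cases k using Fin.lastCases with
  | last =>
    rw [Fin.contractNth_apply_of_gt _ _ _ _ (by simpa using hj), Fin.succ_last,
      Fin.snoc_last, Fin.snoc_last]
  | cast k =>
    rcases lt_trichotomy (k : ℕ) (j : ℕ) with h | h | h
    · rw [Fin.contractNth_apply_of_lt _ _ _ _ (by simpa using h), Fin.snoc_castSucc,
        Fin.snoc_castSucc, Fin.contractNth_apply_of_lt _ _ _ _ h]
    · rw [Fin.contractNth_apply_of_eq _ _ _ _ (by simpa using h), Fin.snoc_castSucc,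
        Fin.succ_castSucc, Fin.snoc_castSucc, Fin.snoc_castSucc,
        Fin.contractNth_apply_of_eq _ _ _ _ h]
    · rw [Fin.contractNth_apply_of_gt _ _ _ _ (by simpa using h), Fin.succ_castSucc,
        Fin.snoc_castSucc, Fin.snoc_castSucc, Fin.contractNth_apply_of_gt _ _ _ _ h]

lemma st15.contract_castSucc_last_snoc {n : ℕ} (γ : Fin (n+1) → G) (τ : G) :
    Fin.contractNth (Fin.last n).castSucc (· * ·) (Fin.snoc γ τ : Fin (n+2) → G) =
      Fin.snoc (fun k : Fin n => γ k.castSucc) (γ (Fin.last n) * τ) := by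
  funext k
  cases k using Fin.lastCases with
  | last =>
    rw [Fin.contractNth_apply_of_eq _ _ _ _ (by simp), Fin.snoc_castSucc, Fin.succ_last,
      Fin.snoc_last, Fin.snoc_last]
  | cast k =>
    rw [Fin.contractNth_apply_of_lt _ _ _ _ (by simpa using k.isLt), Fin.snoc_castSucc,
      Fin.snoc_castSucc]

lemma st15.contract_last_snoc {n : ℕ} (γ : Fin (n+1) → G) (τ : G) :
    Fin.contractNth (Fin.last (n+1)) (· * ·) (Fin.snoc γ τ : Fin (n+2) → G) = γ := by
  funext k
  rw [Fin.contractNth_apply_of_lt _ _ _ _ (by simpa using k.isLt), Fin.snoc_castSucc]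


end st15helpers

set_option maxHeartbeats 1000000 in
lemma st15.key_homotopy {G M : Type*} [Group G] [Fintype G] [CommRing M]
    (ρ : G → M → M) (hadd : ∀ σ x y, ρ σ (x + y) = ρ σ x + ρ σ y)
    (χ : G → M) (C : M)
    (hsum : ∀ u : G, ∑ τ : G, χ (u * τ) = C)
    (hequiv : ∀ σ τ m, ρ σ (χ τ * m) = χ (σ * τ) * ρ σ m)
    (q : ℕ) (f : (Fin (q + 1) → G) → M) (hf : cochainD ρ f = 0) :
    ∃ g : (Fin q → G) → M, (fun γ => C * f γ) = cochainD ρ g := by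
  classical
  -- ρ as additive maps
  let ρh : G → (M →+ M) := fun σ => AddMonoidHom.mk' (ρ σ) (hadd σ)
  have hρh : ∀ σ m, ρh σ m = ρ σ m := fun _ _ => rfl
  set g : (Fin q → G) → M := fun h =>
    (-1 : ℤ) ^ (q + 1) • ∑ τ : G, χ ((List.ofFn h).prod * τ) * f (Fin.snoc h τ) with hg
  refine ⟨g, ?_⟩
  funext γ
  have hq : ∀ δ : Fin (q + 2) → G,
      ρ (δ 0) (f fun i => δ i.succ)
        + ∑ j : Fin (q + 2), (-1 : ℤ) ^ ((j : ℕ) + 1) • f (Fin.contractNth j (· * ·) δ) = 0 :=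
    fun δ => congrFun hf δ
  set Pγ : G := (List.ofFn γ).prod with hPγ
  -- expansion of the relation at snoc γ τ
  have E : ∀ τ : G,
      χ (Pγ * τ) * ρ (γ 0) (f (Fin.snoc (fun i => γ i.succ) τ))
      + (∑ j : Fin (q + 1), (-1 : ℤ) ^ ((j : ℕ) + 1) •
          (χ (Pγ * τ) * f (Fin.contractNth j.castSucc (· * ·) (Fin.snoc γ τ))))
      + (-1 : ℤ) ^ q • (χ (Pγ * τ) * f γ) = 0 := by
    intro τ
    have h0 := hq (Fin.snoc γ τ)
    rw [Fin.sum_univ_castSucc] at h0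
    have e1 : ((Fin.snoc γ τ : Fin (q+2) → G)) 0 = γ 0 := st15.snoc_zero γ τ
    have e2 : (fun i : Fin (q+1) => (Fin.snoc γ τ : Fin (q+2) → G) i.succ)
        = Fin.snoc (fun i : Fin q => γ i.succ) τ := st15.snoc_comp_succ γ τ
    have e3 : Fin.contractNth (Fin.last (q+1)) (· * ·) (Fin.snoc γ τ : Fin (q+2) → G) = γ :=
      st15.contract_last_snoc γ τ
    rw [e1, e2, e3] at h0
    have e4 : (((Fin.last (q+1)).val : ℕ) + 1) = q + 2 := by simp
    rw [e4] at h0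
    have := congrArg (fun z => χ (Pγ * τ) * z) h0
    simp only [mul_zero, mul_add, Finset.mul_sum, mul_smul_comm] at this
    calc χ (Pγ * τ) * ρ (γ 0) (f (Fin.snoc (fun i => γ i.succ) τ))
          + (∑ j : Fin (q + 1), (-1 : ℤ) ^ ((j : ℕ) + 1) •
              (χ (Pγ * τ) * f (Fin.contractNth j.castSucc (· * ·) (Fin.snoc γ τ))))
          + (-1 : ℤ) ^ q • (χ (Pγ * τ) * f γ)
        = χ (Pγ * τ) * ρ (γ 0) (f (Fin.snoc (fun i => γ i.succ) τ))
          + ((∑ j : Fin (q + 1), (-1 : ℤ) ^ ((j : ℕ) + 1) •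
              (χ (Pγ * τ) * f (Fin.contractNth j.castSucc (· * ·) (Fin.snoc γ τ))))
          + (-1 : ℤ) ^ (q + 2) • (χ (Pγ * τ) * f γ)) := by
          rw [add_assoc]
          congr 2
          rw [pow_succ, pow_succ, mul_assoc, neg_mul_neg, one_mul, mul_one]
      _ = 0 := this
  -- now compute cochainD ρ g γ
  have main : cochainD ρ g γ = C * f γ := by
    have hsplit : cochainD ρ g γ
        = ρ (γ 0) (g fun i => γ i.succ)
          + ∑ j : Fin (q + 1), (-1 : ℤ) ^ ((j : ℕ) + 1) •
              g (Fin.contractNth j (· * ·) γ) := rfl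
    -- term A
    have hA : ρ (γ 0) (g fun i => γ i.succ)
        = (-1 : ℤ) ^ (q + 1) •
            ∑ τ : G, χ (Pγ * τ) * ρ (γ 0) (f (Fin.snoc (fun i => γ i.succ) τ)) := by
      have hzs : ∀ (z : ℤ) (m : M), ρ (γ 0) (z • m) = z • ρ (γ 0) m := fun z m => by
        rw [← hρh, ← hρh]; exact map_zsmul (ρh (γ 0)) z m
      have hsm : ∀ (s : Finset G) (F : G → M), ρ (γ 0) (∑ τ ∈ s, F τ) = ∑ τ ∈ s, ρ (γ 0) (F τ) :=
        fun s F => by rw [← hρh]; exact map_sum (ρh (γ 0)) F s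
      simp only [hg]
      simp only [hzs, hsm]
      congr 1
      refine Finset.sum_congr rfl fun τ _ => ?_
      rw [hequiv, ← mul_assoc]
      congr 2
      rw [hPγ, List.ofFn_succ, List.prod_cons]
    -- terms B
    have hB : ∀ j : Fin (q + 1), g (Fin.contractNth j (· * ·) γ)
        = (-1 : ℤ) ^ (q + 1) •
            ∑ τ : G, χ (Pγ * τ) * f (Fin.contractNth j.castSucc (· * ·) (Fin.snoc γ τ)) := by
      intro j
      rcases lt_or_eq_of_le (Nat.lt_succ_iff.mp j.isLt) with hj | hj
      · -- j < q
        simp only [hg]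
        congr 1
        refine Finset.sum_congr rfl fun τ _ => ?_
        rw [st15.prod_contract j hj γ, ← hPγ, st15.contract_castSucc_snoc j hj γ τ]
      · -- j = last
        have hjl : j = Fin.last q := Fin.ext hj
        subst hjl
        simp only [hg, st15.contract_last γ]
        congr 1
        rw [← Equiv.sum_comp (Equiv.mulLeft (γ (Fin.last q)))
            (fun σ => χ ((List.ofFn fun k : Fin q => γ k.castSucc).prod * σ) *
              f (Fin.snoc (fun k : Fin q => γ k.castSucc) σ))]
        refine Finset.sum_congr rfl fun τ _ => ?_
        simp only [Equiv.coe_mulLeft]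
        rw [st15.contract_castSucc_last_snoc γ τ]
        have hP2 : Pγ = (List.ofFn fun k : Fin q => γ k.castSucc).prod * γ (Fin.last q) := by
          rw [hPγ, List.ofFn_succ', List.prod_concat]
        rw [hP2, mul_assoc]
    rw [hsplit, hA]
    have : ∑ j : Fin (q + 1), (-1 : ℤ) ^ ((j : ℕ) + 1) • g (Fin.contractNth j (· * ·) γ)
        = (-1 : ℤ) ^ (q + 1) • ∑ j : Fin (q + 1), (-1 : ℤ) ^ ((j : ℕ) + 1) •
            ∑ τ : G, χ (Pγ * τ) * f (Fin.contractNth j.castSucc (· * ·) (Fin.snoc γ τ)) := by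
      rw [Finset.smul_sum]
      refine Finset.sum_congr rfl fun j _ => ?_
      rw [hB j, smul_comm]
    rw [this, ← smul_add]
    -- sum the relation E over τ
    have hEsum : (∑ τ : G, χ (Pγ * τ) * ρ (γ 0) (f (Fin.snoc (fun i => γ i.succ) τ)))
        + (∑ τ : G, ∑ j : Fin (q + 1), (-1 : ℤ) ^ ((j : ℕ) + 1) •
            (χ (Pγ * τ) * f (Fin.contractNth j.castSucc (· * ·) (Fin.snoc γ τ))))
        + (-1 : ℤ) ^ q • (C * f γ) = 0 := by
      have := Finset.sum_congr rfl (fun τ (_ : τ ∈ Finset.univ) => E τ)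
      rw [Finset.sum_const_zero] at this
      rw [← this]
      rw [Finset.sum_add_distrib, Finset.sum_add_distrib]
      congr 1
      rw [← Finset.smul_sum, ← Finset.sum_mul, hsum Pγ]
    have hswap : (∑ τ : G, ∑ j : Fin (q + 1), (-1 : ℤ) ^ ((j : ℕ) + 1) •
            (χ (Pγ * τ) * f (Fin.contractNth j.castSucc (· * ·) (Fin.snoc γ τ))))
        = ∑ j : Fin (q + 1), (-1 : ℤ) ^ ((j : ℕ) + 1) •
            ∑ τ : G, χ (Pγ * τ) * f (Fin.contractNth j.castSucc (· * ·) (Fin.snoc γ τ)) := by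
      rw [Finset.sum_comm]
      exact Finset.sum_congr rfl fun j _ => (Finset.smul_sum).symm
    rw [hswap] at hEsum
    have hmain2 : (∑ τ : G, χ (Pγ * τ) * ρ (γ 0) (f (Fin.snoc (fun i => γ i.succ) τ)))
        + (∑ j : Fin (q + 1), (-1 : ℤ) ^ ((j : ℕ) + 1) •
            ∑ τ : G, χ (Pγ * τ) * f (Fin.contractNth j.castSucc (· * ·) (Fin.snoc γ τ)))
        = (-1 : ℤ) ^ (q + 1) • (C * f γ) := by
      have h1 : ((-1 : ℤ) ^ (q+1)) • (C * f γ) = -((-1 : ℤ) ^ q • (C * f γ)) := by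
        rw [pow_succ, mul_comm ((-1:ℤ)^q), neg_one_mul, neg_smul]
      rw [h1]
      exact eq_neg_of_add_eq_zero_left hEsum
    rw [hmain2, smul_smul, ← pow_add]
    have : (-1 : ℤ) ^ (q + 1 + (q + 1)) = 1 := Even.neg_one_pow ⟨q + 1, rfl⟩
    rw [this, one_smul]
  exact main.symm


namespace st15

variable {K K' : Type*} [Field K] [Field K'] [Algebra K K']

/-- A valuation subring is integrally closed. -/
lemma int_closed (OK : ValuationSubring K) : IsIntegrallyClosed ↥OK :=
  Valuation.Integers.isIntegrallyClosed (v := OK.valuation)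
    { hom_inj := Subtype.coe_injective
      map_le_one := fun a => OK.valuation_le_one a
      exists_of_le_one := fun r hr => ⟨⟨r, OK.mem_of_valuation_le_one r hr⟩, rfl⟩ }

/-- Elements of `K` integral over `O_K` (equivalently, with image in `O_{K'}`) lie in `O_K`. -/
lemma mem_of_algebraMap_mem (OK : ValuationSubring K) (OK' : ValuationSubring K')
    (hOK' : ∀ x : K', x ∈ OK' ↔ ∃ P : Polynomial ↥OK, P.Monic ∧
      Polynomial.eval₂ ((algebraMap K K').comp OK.subtype) x P = 0)
    (x : K) (hx : algebraMap K K' x ∈ OK') : x ∈ OK := by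
  obtain ⟨P, hmonic, heval⟩ := (hOK' _).mp hx
  have h1 : algebraMap K K' (Polynomial.eval₂ OK.subtype x P) = 0 := by
    rw [Polynomial.hom_eval₂]; exact heval
  have h0 : Polynomial.eval₂ OK.subtype x P = 0 :=
    (map_eq_zero_iff _ (algebraMap K K').injective).mp h1
  have hInt : IsIntegral ↥OK x := ⟨P, hmonic, h0⟩
  have := int_closed OK
  obtain ⟨y, hy⟩ := IsIntegrallyClosed.isIntegral_iff.mp hInt
  rw [← hy]; exact y.2

/-- membership in a span times a fixed element. -/
lemma span_mul_mem {K' : Type*} [Field K'] (OK' : ValuationSubring K') (S : Set K')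
    (x y : K') (N : Submodule ↥OK' K') (hy : y ∈ Submodule.span ↥OK' S)
    (hS : ∀ z ∈ S, z * x ∈ N) : y * x ∈ N := by
  have hle : Submodule.span ↥OK' S ≤ N.comap (LinearMap.mulRight ↥OK' x) :=
    Submodule.span_le.mpr (fun z hz => hS z hz)
  exact hle hy

variable [FiniteDimensional K K'] [IsGalois K K']

/-- The key arithmetic point: `c` is the trace of an element of `O_{K'}`. -/
lemma exists_trace_elem (OK : ValuationSubring K) (OK' : ValuationSubring K')
    (hOK' : ∀ x : K', x ∈ OK' ↔ ∃ P : Polynomial ↥OK, P.Monic ∧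
      Polynomial.eval₂ ((algebraMap K K').comp OK.subtype) x P = 0)
    [Algebra ↥OK ↥OK']
    (hcomp : ∀ x : ↥OK, ((algebraMap ↥OK ↥OK' x : ↥OK') : K') = algebraMap K K' (x : K))
    (hnf : ¬ IsField ↥OK)
    (c : ↥OK)
    (hc : algebraMap K K' (c : K) ∈ Submodule.span ↥OK'
      {z : K' | ∃ ε : ↥OK, ε ∈ tildeMax OK ∧ ∃ d ∈ differentSet K K' OK OK',
        z = algebraMap K K' (ε : K) * d}) :
    ∃ a : K', a ∈ OK' ∧ Algebra.trace K K' a = (c : K) := by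
  classical
  by_cases hc0 : (c : K) = 0
  · exact ⟨0, OK'.zero_mem, by rw [map_zero, hc0]⟩
  have hmapmem : ∀ s : K, s ∈ OK → algebraMap K K' s ∈ OK' := by
    intro s hs
    rw [← hcomp ⟨s, hs⟩]
    exact SetLike.coe_mem _
  by_cases hcod : ∀ w : K', w ∈ OK' →
      Algebra.trace K K' (algebraMap K K' ((c : K)⁻¹) * w) ∈ OK
  · -- `c⁻¹` is in the codifferent
    by_cases hprin : (IsLocalRing.maximalIdeal ↥OK).IsPrincipal
    · -- discrete case
      obtain ⟨p, hp⟩ := hprin.principal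
      have hp0 : p ≠ 0 := by
        intro h
        apply hnf
        rw [IsLocalRing.isField_iff_maximalIdeal_eq, hp, h]
        exact Ideal.span_singleton_eq_bot.mpr rfl
      have hpK0 : (p : K) ≠ 0 := fun h => hp0 (Subtype.ext h)
      have hpm : p ∈ IsLocalRing.maximalIdeal ↥OK := by
        rw [hp]; exact Ideal.mem_span_singleton_self p
      have hpnu : ¬ IsUnit p := (IsLocalRing.mem_maximalIdeal _).mp hpm
      by_cases hu : ∀ w : K', w ∈ OK' → ∃ vv : ↥OK,
          Algebra.trace K K' (algebraMap K K' ((c : K)⁻¹) * w) = (p : K) * (vv : K)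
      · -- all normalized traces divisible by p : contradiction
        exfalso
        have hcdual : ∀ y : K', y ∈ OK' →
            Algebra.trace K K' (algebraMap K K' ((c : K)⁻¹ * (p : K)⁻¹) * y) ∈ OK := by
          intro y hy
          obtain ⟨vv, hvv⟩ := hu y hy
          have he : algebraMap K K' ((c : K)⁻¹ * (p : K)⁻¹) * y
              = (p : K)⁻¹ • (algebraMap K K' ((c : K)⁻¹) * y) := by
            rw [Algebra.smul_def, map_mul]; ring
          rw [he, map_smul, smul_eq_mul, hvv]
          have : (p : K)⁻¹ * ((p : K) * (vv : K)) = (vv : K) := by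
            field_simp
          rw [this]; exact vv.2
        have htT : tildeMax OK = ⊤ := by
          simp only [tildeMax]; rw [if_pos ⟨⟨p, hp⟩⟩]
        set x : K' := algebraMap K K' ((c : K)⁻¹ * (p : K)⁻¹) with hxdef
        have hmem1 : algebraMap K K' (c : K) * x ∈ (1 : Submodule ↥OK' K') := by
          refine span_mul_mem OK' _ x _ _ hc ?_
          rintro z ⟨ε, hε, d, hd, rfl⟩
          have hdx : d * x ∈ OK' := by
            refine hd.2 x ?_
            intro y hy
            exact hcdual y hy
          have hεm : algebraMap K K' (ε : K) ∈ OK' := hmapmem _ ε.2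
          have hzx : algebraMap K K' (ε : K) * d * x
              = ((⟨algebraMap K K' (ε : K) * (d * x),
                  OK'.mul_mem _ _ hεm hdx⟩ : ↥OK') : K') := by
            push_cast; ring
          rw [hzx]
          exact Submodule.mem_one.mpr ⟨⟨algebraMap K K' (ε : K) * (d * x),
            OK'.mul_mem _ _ hεm hdx⟩, rfl⟩
        obtain ⟨r, hr⟩ := Submodule.mem_one.mp hmem1
        have hrval : algebraMap ↥OK' K' r = algebraMap K K' ((p : K)⁻¹) := by
          rw [hr, hxdef, ← map_mul]
          congr 1
          field_simp
        have hpinv : (p : K)⁻¹ ∈ OK := by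
          refine mem_of_algebraMap_mem OK OK' hOK' _ ?_
          rw [← hrval]
          exact SetLike.coe_mem r
        exact hpnu (IsUnit.of_mul_eq_one (a := p) ⟨(p : K)⁻¹, hpinv⟩
          (Subtype.ext (mul_inv_cancel₀ hpK0)))
      · -- some trace is `c` times a unit
        push_neg at hu
        obtain ⟨w, hw, hne⟩ := hu
        have hmem := hcod w hw
        set u : ↥OK := ⟨Algebra.trace K K' (algebraMap K K' ((c : K)⁻¹) * w), hmem⟩ with hu0
        have hunotm : u ∉ IsLocalRing.maximalIdeal ↥OK := by
          intro h
          rw [hp] at h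
          obtain ⟨vv, hvv⟩ := Submodule.mem_span_singleton.mp h
          refine hne vv ?_
          rw [show Algebra.trace K K' (algebraMap K K' ((c : K)⁻¹) * w)
            = (u : K) from rfl, ← hvv]
          push_cast [smul_eq_mul]
          ring
        have hunit : IsUnit u := by
          by_contra h
          exact hunotm ((IsLocalRing.mem_maximalIdeal _).mpr h)
        obtain ⟨u1, hu1⟩ := hunit
        refine ⟨algebraMap K K' ((↑(u1⁻¹) : ↥OK) : K) * w, OK'.mul_mem _ _
          (hmapmem _ (SetLike.coe_mem _)) hw, ?_⟩
        have htr : Algebra.trace K K' (algebraMap K K' ((↑(u1⁻¹) : ↥OK) : K) * w)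
            = ((↑(u1⁻¹) : ↥OK) : K) * Algebra.trace K K' w := by
          rw [← Algebra.smul_def, map_smul, smul_eq_mul]
        have htw : Algebra.trace K K' w = (c : K) * (u : K) := by
          have hthis : (u : K) = (c : K)⁻¹ * Algebra.trace K K' w := by
            show Algebra.trace K K' (algebraMap K K' ((c : K)⁻¹) * w) = _
            rw [← Algebra.smul_def, map_smul, smul_eq_mul]
          rw [hthis]
          field_simp
        have hinvu : ((↑(u1⁻¹) : ↥OK) : K) * (u : K) = 1 := by
          have h2 : (↑(u1⁻¹) : ↥OK) * u = 1 := by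
            rw [← hu1]; exact u1.inv_mul
          calc ((↑(u1⁻¹) : ↥OK) : K) * (u : K) = (((↑(u1⁻¹) : ↥OK) * u : ↥OK) : K) := by push_cast; ring
            _ = 1 := by rw [h2]; rfl
        rw [htr, htw]
        calc ((↑(u1⁻¹) : ↥OK) : K) * ((c : K) * (u : K))
            = (((↑(u1⁻¹) : ↥OK) : K) * (u : K)) * (c : K) := by ring
          _ = (c : K) := by rw [hinvu, one_mul]
    · -- non-discrete case : contradiction
      exfalso
      have htM : tildeMax OK = IsLocalRing.maximalIdeal ↥OK := by
        simp only [tildeMax]; rw [if_neg hprin]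
      set x : K' := algebraMap K K' ((c : K)⁻¹) with hxdef
      set N : Submodule ↥OK' K' := Submodule.span ↥OK'
        ((fun ε : ↥OK => algebraMap K K' (ε : K)) ''
          {ε : ↥OK | ε ∈ IsLocalRing.maximalIdeal ↥OK}) with hNdef
      have h1N : (1 : K') ∈ N := by
        have hmul : algebraMap K K' (c : K) * x ∈ N := by
          refine span_mul_mem OK' _ x _ _ hc ?_
          rintro z ⟨ε, hε, d, hd, rfl⟩
          rw [htM] at hε
          have hdx : d * x ∈ OK' := hd.2 x (fun y hy => hcod y hy)
          have hzx : algebraMap K K' (ε : K) * d * x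
              = (⟨d * x, hdx⟩ : ↥OK') • algebraMap K K' (ε : K) := by
            rw [Algebra.smul_def]
            show _ = ((⟨d * x, hdx⟩ : ↥OK') : K') * _
            ring
          rw [hzx]
          exact Submodule.smul_mem N _ (Submodule.subset_span ⟨ε, hε, rfl⟩)
        rwa [← map_mul, mul_inv_cancel₀ hc0, map_one] at hmul
      -- but N is contained in the maximal ideal of OK'
      have hNle : N ≤ Submodule.map (Algebra.linearMap ↥OK' K') (IsLocalRing.maximalIdeal ↥OK' : Submodule ↥OK' ↥OK') := by
        rw [hNdef]
        refine Submodule.span_le.mpr ?_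
        rintro z ⟨ε, hε, rfl⟩
        have hnu : algebraMap ↥OK ↥OK' ε ∈ IsLocalRing.maximalIdeal ↥OK' := by
          rw [IsLocalRing.mem_maximalIdeal, mem_nonunits_iff]
          intro hunit
          obtain ⟨v, hv⟩ := hunit.exists_left_inv
          have hK'eq : (v : K') * algebraMap K K' (ε : K) = 1 := by
            have := congrArg (fun z : ↥OK' => (z : K')) hv
            simpa [hcomp] using this
          have hε0 : (ε : K) ≠ 0 := by
            intro h0
            rw [h0, map_zero, mul_zero] at hK'eq
            exact zero_ne_one hK'eq
          have hvval : (v : K') = algebraMap K K' ((ε : K)⁻¹) := by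
            rw [map_inv₀]
            exact eq_inv_of_mul_eq_one_left hK'eq
          have hinv : (ε : K)⁻¹ ∈ OK := by
            refine mem_of_algebraMap_mem OK OK' hOK' _ ?_
            rw [← hvval]; exact SetLike.coe_mem v
          have : IsUnit ε := IsUnit.of_mul_eq_one (a := ε) ⟨(ε : K)⁻¹, hinv⟩
            (Subtype.ext (by push_cast; field_simp))
          exact ((IsLocalRing.mem_maximalIdeal _).mp hε) this
        exact Submodule.mem_map.mpr ⟨algebraMap ↥OK ↥OK' ε, hnu, (hcomp ε)⟩
      obtain ⟨one', hone', honeval⟩ := Submodule.mem_map.mp (hNle h1N)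
      have hone1 : one' = 1 := Subtype.coe_injective honeval
      rw [hone1] at hone'
      exact ((IsLocalRing.mem_maximalIdeal _).mp hone') isUnit_one
  · -- `c⁻¹` not in the codifferent: direct construction
    push_neg at hcod
    obtain ⟨w, hw, ht⟩ := hcod
    set t : K := Algebra.trace K K' (algebraMap K K' ((c : K)⁻¹) * w) with htdef
    have ht0 : t ≠ 0 := fun h => ht (h ▸ OK.zero_mem)
    have htinv : t⁻¹ ∈ OK := (OK.mem_or_inv_mem t).resolve_left ht
    refine ⟨algebraMap K K' t⁻¹ * w, OK'.mul_mem _ _ (hmapmem _ htinv) hw, ?_⟩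
    have htr : Algebra.trace K K' (algebraMap K K' t⁻¹ * w)
        = t⁻¹ * Algebra.trace K K' w := by
      rw [← Algebra.smul_def, map_smul, smul_eq_mul]
    have htw : Algebra.trace K K' w = (c : K) * t := by
      have hthis : t = (c : K)⁻¹ * Algebra.trace K K' w := by
        rw [htdef, ← Algebra.smul_def, map_smul, smul_eq_mul]
      rw [hthis]
      field_simp
    rw [htr, htw]
    field_simp

end st15

set_option synthInstance.maxHeartbeats 1000000 in
set_option maxHeartbeats 1000000 in
/-- Let `K → K'` be a finite Galois extension of Henselian valuation fields of
height `1` with Galois group `G`, `π ∈ O_K`, and `c ∈ O_K` lying in the ideal of `O_{K'}`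
generated by `m̃_K·𝔇_{K'/K}`.  Then the natural map `O_K/π → H⁰(G, O_{K'}/π)` is injective with
cokernel killed by `c`, and `c` kills `H^q(G, O_{K'}/π)` for all `q ≥ 1` (expressed via the
complex of inhomogeneous cochains). -/
theorem statement15
    (K K' : Type*) [Field K] [Field K']
    [Algebra K K'] [FiniteDimensional K K'] [IsGalois K K']
    (OK : ValuationSubring K) (OK' : ValuationSubring K')
    [HenselianLocalRing ↥OK]
    (hK1 : ¬ IsField ↥OK ∧ ∃ v : Valuation K NNReal, ∀ x : K, v x ≤ 1 ↔ x ∈ OK)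
    (hOK' : ∀ x : K', x ∈ OK' ↔ ∃ P : Polynomial ↥OK, P.Monic ∧
      Polynomial.eval₂ ((algebraMap K K').comp OK.subtype) x P = 0)
    (hstab : ∀ (σ : K' ≃ₐ[K] K') (y : K'), y ∈ OK' → σ y ∈ OK')
    [Algebra ↥OK ↥OK']
    (hcomp : ∀ x : ↥OK, ((algebraMap ↥OK ↥OK' x : ↥OK') : K') = algebraMap K K' (x : K))
    (π : ↥OK)
    (c : ↥OK)
    (hc : algebraMap K K' (c : K) ∈ Submodule.span ↥OK'
      {z : K' | ∃ ε : ↥OK, ε ∈ tildeMax OK ∧ ∃ d ∈ differentSet K K' OK OK',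
        z = algebraMap K K' (ε : K) * d})
    (ρ : (K' ≃ₐ[K] K') →
      (↥OK' ⧸ Ideal.span {algebraMap ↥OK ↥OK' π}) →
      (↥OK' ⧸ Ideal.span {algebraMap ↥OK ↥OK' π}))
    (hρ : ∀ (σ : K' ≃ₐ[K] K') (x : ↥OK'),
      ρ σ (Ideal.Quotient.mk (Ideal.span {algebraMap ↥OK ↥OK' π}) x) =
        Ideal.Quotient.mk (Ideal.span {algebraMap ↥OK ↥OK' π})
          ⟨σ (x : K'), hstab σ (x : K') x.2⟩) :
    Function.Injective
      (Ideal.quotientMap (Ideal.span {algebraMap ↥OK ↥OK' π}) (algebraMap ↥OK ↥OK')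
        (by
          rw [Ideal.span_le, Set.singleton_subset_iff, SetLike.mem_coe, Ideal.mem_comap]
          exact Ideal.subset_span (Set.mem_singleton _))) ∧
    (∀ y : ↥OK' ⧸ Ideal.span {algebraMap ↥OK ↥OK' π},
      (∀ σ : K' ≃ₐ[K] K', ρ σ y = y) →
      ∃ x : ↥OK ⧸ Ideal.span {π},
        Ideal.Quotient.mk (Ideal.span {algebraMap ↥OK ↥OK' π}) (algebraMap ↥OK ↥OK' c) * y =
          Ideal.quotientMap (Ideal.span {algebraMap ↥OK ↥OK' π}) (algebraMap ↥OK ↥OK')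
            (by
              rw [Ideal.span_le, Set.singleton_subset_iff, SetLike.mem_coe, Ideal.mem_comap]
              exact Ideal.subset_span (Set.mem_singleton _)) x) ∧
    (∀ (q : ℕ)
      (f : (Fin (q + 1) → (K' ≃ₐ[K] K')) → ↥OK' ⧸ Ideal.span {algebraMap ↥OK ↥OK' π}),
      cochainD ρ f = 0 →
      ∃ g : (Fin q → (K' ≃ₐ[K] K')) → ↥OK' ⧸ Ideal.span {algebraMap ↥OK ↥OK' π},
        (fun γ => Ideal.Quotient.mk (Ideal.span {algebraMap ↥OK ↥OK' π})
            (algebraMap ↥OK ↥OK' c) * f γ) = cochainD ρ g) := by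
  
  classical
  obtain ⟨hnf, -⟩ := hK1
  obtain ⟨a, ha, hTa⟩ := st15.exists_trace_elem OK OK' hOK' hcomp hnf c hc
  set φ : (K' ≃ₐ[K] K') → ↥OK' → ↥OK' :=
    fun σ x => (⟨σ (x : K'), hstab σ (x : K') x.2⟩ : ↥OK') with hφ
  have hρ' : ∀ (σ : K' ≃ₐ[K] K') (x : ↥OK'),
      ρ σ (Ideal.Quotient.mk (Ideal.span {algebraMap ↥OK ↥OK' π}) x)
        = Ideal.Quotient.mk (Ideal.span {algebraMap ↥OK ↥OK' π}) (φ σ x) := hρ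
  have hadd : ∀ σ x y, ρ σ (x + y) = ρ σ x + ρ σ y := by
    intro σ x y
    obtain ⟨x, rfl⟩ := Ideal.Quotient.mk_surjective x
    obtain ⟨y, rfl⟩ := Ideal.Quotient.mk_surjective y
    rw [← map_add, hρ', hρ', hρ', ← map_add]
    congr 1
    apply Subtype.ext
    show σ ((x : K') + (y : K')) = σ (x : K') + σ (y : K')
    exact map_add σ _ _
  set α : ↥OK' := ⟨a, ha⟩ with hα
  set χ : (K' ≃ₐ[K] K') → (↥OK' ⧸ Ideal.span {algebraMap ↥OK ↥OK' π}) :=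
    fun σ => Ideal.Quotient.mk (Ideal.span {algebraMap ↥OK ↥OK' π}) (φ σ α) with hχ
  set C : ↥OK' ⧸ Ideal.span {algebraMap ↥OK ↥OK' π} :=
    Ideal.Quotient.mk (Ideal.span {algebraMap ↥OK ↥OK' π}) (algebraMap ↥OK ↥OK' c) with hC
  have hφsum : (∑ σ : K' ≃ₐ[K] K', φ σ α) = algebraMap ↥OK ↥OK' c := by
    rw [Subtype.ext_iff, hcomp]
    rw [show ((∑ σ : K' ≃ₐ[K] K', φ σ α : ↥OK') : K')
        = OK'.subtype (∑ σ : K' ≃ₐ[K] K', φ σ α) from rfl, map_sum]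
    have hterm : ∀ σ : K' ≃ₐ[K] K', OK'.subtype (φ σ α) = σ a := fun σ => rfl
    simp only [hterm]
    rw [← hTa]
    exact (trace_eq_sum_automorphisms a).symm
  have hsum : ∀ u : K' ≃ₐ[K] K', (∑ τ : K' ≃ₐ[K] K', χ (u * τ)) = C := by
    intro u
    have h2 := Equiv.sum_comp (Equiv.mulLeft u) χ
    simp only [Equiv.coe_mulLeft] at h2
    rw [h2]
    show (∑ τ : K' ≃ₐ[K] K',
        Ideal.Quotient.mk (Ideal.span {algebraMap ↥OK ↥OK' π}) (φ τ α))
      = Ideal.Quotient.mk (Ideal.span {algebraMap ↥OK ↥OK' π}) (algebraMap ↥OK ↥OK' c)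
    rw [← map_sum, hφsum]
  have hequiv : ∀ σ τ m, ρ σ (χ τ * m) = χ (σ * τ) * ρ σ m := by
    intro σ τ m
    obtain ⟨x, rfl⟩ := Ideal.Quotient.mk_surjective m
    show ρ σ (Ideal.Quotient.mk (Ideal.span {algebraMap ↥OK ↥OK' π}) (φ τ α)
        * Ideal.Quotient.mk (Ideal.span {algebraMap ↥OK ↥OK' π}) x)
      = Ideal.Quotient.mk (Ideal.span {algebraMap ↥OK ↥OK' π}) (φ (σ * τ) α)
        * ρ σ (Ideal.Quotient.mk (Ideal.span {algebraMap ↥OK ↥OK' π}) x)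
    rw [← map_mul, hρ', hρ', ← map_mul]
    congr 1
    apply Subtype.ext
    show σ ((τ a) * (x : K')) = (σ * τ) a * σ (x : K')
    rw [map_mul σ, AlgEquiv.mul_apply]
  have hχone : χ 1 = Ideal.Quotient.mk (Ideal.span {algebraMap ↥OK ↥OK' π}) α := by
    show Ideal.Quotient.mk (Ideal.span {algebraMap ↥OK ↥OK' π}) (φ 1 α) = _
    exact congrArg _ (Subtype.ext (AlgEquiv.one_apply a))
  refine ⟨?_, ?_, ?_⟩
  · -- injectivity
    refine Ideal.quotientMap_injective' ?_
    intro x hx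
    rw [Ideal.mem_comap, Ideal.mem_span_singleton] at hx
    obtain ⟨y, hy⟩ := hx
    rw [Ideal.mem_span_singleton]
    by_cases hπ : (π : K) = 0
    · have hπ0 : π = 0 := Subtype.ext hπ
      rw [hπ0, map_zero, zero_mul] at hy
      have h2 : algebraMap K K' (x : K) = 0 := by rw [← hcomp, hy]; rfl
      have h3 : (x : K) = 0 :=
        (algebraMap K K').injective (by rw [h2, map_zero])
      have hx0 : x = 0 := Subtype.ext h3
      rw [hπ0, hx0]
    · have hπK' : algebraMap K K' (π : K) ≠ 0 := fun h =>
        hπ ((algebraMap K K').injective (by rw [h, map_zero]))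
      have h2 : algebraMap K K' (x : K) = algebraMap K K' (π : K) * (y : K') := by
        have h3 := congrArg (fun z : ↥OK' => (z : K')) hy
        simpa [hcomp] using h3
      have hyv : (y : K') = algebraMap K K' ((x : K) * (π : K)⁻¹) := by
        rw [map_mul, map_inv₀, h2]
        field_simp
      have hxπ : (x : K) * (π : K)⁻¹ ∈ OK :=
        st15.mem_of_algebraMap_mem OK OK' hOK' _ (by rw [← hyv]; exact y.2)
      refine ⟨⟨(x : K) * (π : K)⁻¹, hxπ⟩, Subtype.ext ?_⟩
      push_cast
      field_simp
  · -- H⁰ : cokernel killed by c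
    intro y hy
    obtain ⟨w, rfl⟩ := Ideal.Quotient.mk_surjective y
    have htK' : algebraMap K K' (Algebra.trace K K' (a * (w : K'))) ∈ OK' := by
      rw [trace_eq_sum_automorphisms]
      exact sum_mem (fun σ _ => hstab σ _ (OK'.mul_mem _ _ ha w.2))
    refine ⟨Ideal.Quotient.mk (Ideal.span {π}) ⟨Algebra.trace K K' (a * (w : K')),
      st15.mem_of_algebraMap_mem OK OK' hOK' _ htK'⟩, ?_⟩
    rw [Ideal.quotientMap_mk]
    have halg : algebraMap ↥OK ↥OK' (⟨Algebra.trace K K' (a * (w : K')),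
        st15.mem_of_algebraMap_mem OK OK' hOK' _ htK'⟩ : ↥OK)
        = ∑ σ : K' ≃ₐ[K] K', φ σ (α * w) := by
      rw [Subtype.ext_iff, hcomp]
      rw [show ((∑ σ : K' ≃ₐ[K] K', φ σ (α * w) : ↥OK') : K')
          = OK'.subtype (∑ σ : K' ≃ₐ[K] K', φ σ (α * w)) from rfl, map_sum]
      have hterm : ∀ σ : K' ≃ₐ[K] K', OK'.subtype (φ σ (α * w)) = σ (a * (w : K')) :=
        fun σ => rfl
      simp only [hterm]
      exact trace_eq_sum_automorphisms _
    have hterm2 : ∀ σ : K' ≃ₐ[K] K',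
        Ideal.Quotient.mk (Ideal.span {algebraMap ↥OK ↥OK' π}) (φ σ (α * w))
        = χ σ * Ideal.Quotient.mk (Ideal.span {algebraMap ↥OK ↥OK' π}) w := by
      intro σ
      rw [← hρ', map_mul, ← hχone, hequiv, mul_one, hy σ]
    have hfin : Ideal.Quotient.mk (Ideal.span {algebraMap ↥OK ↥OK' π})
        (algebraMap ↥OK ↥OK' (⟨Algebra.trace K K' (a * (w : K')),
          st15.mem_of_algebraMap_mem OK OK' hOK' _ htK'⟩ : ↥OK))
        = C * Ideal.Quotient.mk (Ideal.span {algebraMap ↥OK ↥OK' π}) w := by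
      rw [halg, map_sum]
      simp only [hterm2]
      rw [← Finset.sum_mul]
      congr 1
      have h3 := hsum 1
      simpa using h3
    exact hfin.symm
  · -- higher cohomology killed by c
    intro q f hf
    exact st15.key_homotopy ρ hadd χ C hsum hequiv q f hf
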